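/- Let R be a Dedekind domain whose ideal class group is finitely generated. Then there exists a nonzero element f in R such that the localization R[1/f] is a principal ideal domain. -/

import Mathlib

open nonZeroDivisors

set_option maxHeartbeats 1000000

/-- If the ideal class group of a Dedekind domain `R` is finitely generated, then
there is a nonzero `f : R` such that `R[1/f]` is a principal ideal domain. -/
theorem exists_localization_away_pid_of_fg_classGroup
    (R : Type*) [CommRing R] [IsDomain R] [IsDedekindDomain R]
    (hR : Group.FG (ClassGroup R)) :
    ∃ f : R, f ≠ 0 ∧ IsPrincipalIdealRing (Localization.Away f) := by
  obtain ⟨S, hSclosure, hSfin⟩ := Group.fg_iff.mp hR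
  -- choose representative ideals for the generators
  choose rep hrep using fun c : ClassGroup R => ClassGroup.mk0_surjective (R := R) c
  -- the product of the representative ideals of the generators
  have hSfin' : hSfin.toFinset = hSfin.toFinset := rfl
  set T : Finset (ClassGroup R) := hSfin.toFinset with hT
  have hI0 : (∏ c ∈ T, (rep c : Ideal R)) ∈ (Ideal R)⁰ :=
    Submonoid.prod_mem _ fun c _ => (rep c).2
  have hI0ne : (∏ c ∈ T, (rep c : Ideal R)) ≠ ⊥ :=
    mem_nonZeroDivisors_iff_ne_zero.mp hI0
  obtain ⟨f, hfmem, hfne⟩ := Submodule.exists_mem_ne_zero_of_ne_bot hI0ne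
  refine ⟨f, hfne, ?_⟩
  set A := Localization.Away f with hA
  have hfle : Submonoid.powers f ≤ R⁰ :=
    powers_le_nonZeroDivisors_of_noZeroDivisors hfne
  haveI : IsDomain A := IsLocalization.isDomain_localization hfle
  haveI : IsDedekindDomain A := IsLocalization.isDedekindDomain R hfle A
  have halg : Function.Injective (algebraMap R A) :=
    IsLocalization.injective A hfle
  -- extension of ideals preserves being a nonzerodivisor
  have hmapmem : ∀ I : (Ideal R)⁰, (I : Ideal R).map (algebraMap R A) ∈ (Ideal A)⁰ := by
    intro I
    rw [mem_nonZeroDivisors_iff_ne_zero]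
    have hIne : (I : Ideal R) ≠ ⊥ := mem_nonZeroDivisors_iff_ne_zero.mp I.2
    obtain ⟨x, hx, hxne⟩ := Submodule.exists_mem_ne_zero_of_ne_bot hIne
    intro h
    have : algebraMap R A x ∈ (I : Ideal R).map (algebraMap R A) :=
      Ideal.mem_map_of_mem _ hx
    rw [h] at this
    exact hxne (halg (by simpa using this))
  -- the "extension class" map
  set ψ : (Ideal R)⁰ → ClassGroup A := fun I =>
    ClassGroup.mk0 ⟨(I : Ideal R).map (algebraMap R A), hmapmem I⟩ with hψ
  have hψmul : ∀ I J : (Ideal R)⁰, ψ (I * J) = ψ I * ψ J := by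
    intro I J
    have h : (⟨((I * J : (Ideal R)⁰) : Ideal R).map (algebraMap R A), hmapmem (I * J)⟩ :
        (Ideal A)⁰) = ⟨(I : Ideal R).map (algebraMap R A), hmapmem I⟩ *
          ⟨(J : Ideal R).map (algebraMap R A), hmapmem J⟩ := by
      ext : 1
      exact Ideal.map_mul _ _ _
    show ClassGroup.mk0 _ = ClassGroup.mk0 _ * ClassGroup.mk0 _
    rw [h, MonoidHom.map_mul]
  have hψprin : ∀ I : (Ideal R)⁰, (I : Ideal R).IsPrincipal → ψ I = 1 := by
    intro I hI
    obtain ⟨a, ha⟩ := hI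
    rw [hψ]
    rw [ClassGroup.mk0_eq_one_iff]
    refine ⟨algebraMap R A a, ?_⟩
    simp only [ha, Ideal.submodule_span_eq]
    rw [Ideal.map_span, Set.image_singleton]
  -- well-definedness: ψ only depends on the class
  have hcongr : ∀ I J : (Ideal R)⁰, ClassGroup.mk0 I = ClassGroup.mk0 J → ψ I = ψ J := by
    intro I J h
    obtain ⟨K, hK⟩ := ClassGroup.mk0_surjective (R := R) (ClassGroup.mk0 I)⁻¹
    have hIK : ClassGroup.mk0 I = (ClassGroup.mk0 K)⁻¹ := by rw [hK, inv_inv]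
    have hJK : ClassGroup.mk0 J = (ClassGroup.mk0 K)⁻¹ := by rw [← h, hIK]
    obtain ⟨x, hxne, hx⟩ := ClassGroup.mk0_eq_mk0_inv_iff.mp hIK
    obtain ⟨y, hyne, hy⟩ := ClassGroup.mk0_eq_mk0_inv_iff.mp hJK
    have h1 : ψ I * ψ K = 1 := by
      rw [← hψmul]
      refine hψprin _ ?_
      exact ⟨x, by simpa using hx⟩
    have h2 : ψ J * ψ K = 1 := by
      rw [← hψmul]
      refine hψprin _ ?_
      exact ⟨y, by simpa using hy⟩
    exact mul_right_cancel (h1.trans h2.symm)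
  -- the key predicate
  set P : ClassGroup R → Prop := fun c => ∀ I : (Ideal R)⁰, ClassGroup.mk0 I = c → ψ I = 1
    with hP
  have hPall : ∀ c : ClassGroup R, P c := by
    intro c
    have hc : c ∈ Subgroup.closure S := hSclosure ▸ Subgroup.mem_top c
    induction hc using Subgroup.closure_induction with
    | mem g hg =>
      intro I hI
      have hgT : g ∈ T := hSfin.mem_toFinset.mpr hg
      have : ψ I = ψ (rep g) := hcongr _ _ (by rw [hI, hrep])
      rw [this, hψ]
      rw [ClassGroup.mk0_eq_one_iff]
      have hf : algebraMap R A f ∈ (rep g : Ideal R).map (algebraMap R A) :=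
        Ideal.mem_map_of_mem _ (Ideal.prod_le_inf.trans (Finset.inf_le hgT) hfmem)
      have hfunit : IsUnit (algebraMap R A f) :=
        IsLocalization.map_units A ⟨f, Submonoid.mem_powers f⟩
      have : (rep g : Ideal R).map (algebraMap R A) = ⊤ :=
        Ideal.eq_top_of_isUnit_mem _ hf hfunit
      rw [this]
      exact ⟨1, by simp⟩
    | one =>
      intro I hI
      exact hψprin I ((ClassGroup.mk0_eq_one_iff I.2).mp hI)
    | mul a b _ _ ha hb =>
      intro I hI
      obtain ⟨Ia, hIa⟩ := ClassGroup.mk0_surjective (R := R) a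
      obtain ⟨Ib, hIb⟩ := ClassGroup.mk0_surjective (R := R) b
      have : ψ I = ψ (Ia * Ib) := by
        refine hcongr _ _ ?_
        rw [hI, MonoidHom.map_mul, hIa, hIb]
      rw [this, hψmul, ha Ia hIa, hb Ib hIb, one_mul]
    | inv a _ ha =>
      intro I hI
      obtain ⟨Ia, hIa⟩ := ClassGroup.mk0_surjective (R := R) a
      have h1 : ClassGroup.mk0 (I * Ia) = 1 := by
        rw [MonoidHom.map_mul, hI, hIa, inv_mul_cancel]
      have := hψprin (I * Ia) ((ClassGroup.mk0_eq_one_iff (I * Ia).2).mp h1)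
      rw [hψmul, ha Ia hIa, mul_one] at this
      exact this
  -- conclude: every ideal of A is principal
  constructor
  intro J
  by_cases hJ : J = ⊥
  · rw [hJ]; exact bot_isPrincipal
  · have hcomap : (J.comap (algebraMap R A)) ≠ ⊥ := by
      intro h
      apply hJ
      rw [← IsLocalization.map_comap (Submonoid.powers f) A J, show Ideal.under R J = ⊥ from h, Ideal.map_bot]
    have hmem : J.comap (algebraMap R A) ∈ (Ideal R)⁰ :=
      mem_nonZeroDivisors_iff_ne_zero.mpr hcomap
    have := hPall (ClassGroup.mk0 ⟨_, hmem⟩) ⟨_, hmem⟩ rfl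
    rw [hψ, ClassGroup.mk0_eq_one_iff] at this
    rwa [IsLocalization.map_comap (Submonoid.powers f) A J] at this
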